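/- Suppose subspaces W₁,...,W_N of ℝ^M with orthogonal projections P_n allow phase retrieval. Then there exists ε > 0 such that for every family of subspaces W′₁,...,W′_N with orthogonal projections Q_n satisfying ‖P_n − Q_n‖ < ε (operator norm) for all n, the subspaces {W′_n} also allow phase retrieval. -/

import Mathlib

open scoped RealInnerProductSpace

/-- Key algebraic identity: the polarization-type identity for orthogonal projections. -/
lemma proj_polar {M : ℕ} (K : Submodule ℝ (EuclideanSpace ℝ (Fin M)))
    (x y : EuclideanSpace ℝ (Fin M)) :
    ⟪(K.subtypeL.comp (K.orthogonalProjectionOnto)) (x + y), x - y⟫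
      = ‖K.orthogonalProjectionOnto x‖ ^ 2 - ‖K.orthogonalProjectionOnto y‖ ^ 2 := by
  set T := K.subtypeL.comp (K.orthogonalProjectionOnto) with hT
  have hsymm : ∀ a b : EuclideanSpace ℝ (Fin M), ⟪T a, b⟫ = ⟪a, T b⟫ := fun a b =>
    Submodule.inner_starProjection_left_eq_right K a b
  have hself : ∀ z : EuclideanSpace ℝ (Fin M),
      ⟪T z, z⟫ = ‖K.orthogonalProjectionOnto z‖ ^ 2 := by
    intro z
    have h1 : ⟪K.orthogonalProjectionOnto z, K.orthogonalProjectionOnto z⟫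
        = ⟪z, ((K.orthogonalProjectionOnto z : EuclideanSpace ℝ (Fin M)))⟫ :=
      Submodule.inner_orthogonalProjectionOnto_eq_of_mem_right (K := K) (K.orthogonalProjectionOnto z) z
    calc ⟪T z, z⟫ = ⟪z, ((K.orthogonalProjectionOnto z : EuclideanSpace ℝ (Fin M)))⟫ :=
          real_inner_comm _ _
      _ = ⟪K.orthogonalProjectionOnto z, K.orthogonalProjectionOnto z⟫ := h1.symm
      _ = ‖K.orthogonalProjectionOnto z‖ ^ 2 := real_inner_self_eq_norm_sq _
  have hyx : ⟪T y, x⟫ = ⟪T x, y⟫ := by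
    rw [hsymm y x, real_inner_comm]
  rw [map_add, inner_sub_right, inner_add_left, inner_add_left, hself x, hself y, hyx]
  ring

set_option maxHeartbeats 1000000 in
theorem stmt_10 (M N : ℕ) (W : Fin N → Submodule ℝ (EuclideanSpace ℝ (Fin M)))
    (hPR : ∀ x y : EuclideanSpace ℝ (Fin M),
        (∀ n, ‖(W n).orthogonalProjectionOnto x‖ = ‖(W n).orthogonalProjectionOnto y‖) →
        x = y ∨ x = -y) :
    ∃ ε > (0 : ℝ), ∀ W' : Fin N → Submodule ℝ (EuclideanSpace ℝ (Fin M)),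
      (∀ n, ‖(W n).subtypeL.comp ((W n).orthogonalProjectionOnto) -
              (W' n).subtypeL.comp ((W' n).orthogonalProjectionOnto)‖ < ε) →
      ∀ x y : EuclideanSpace ℝ (Fin M),
        (∀ n, ‖(W' n).orthogonalProjectionOnto x‖ = ‖(W' n).orthogonalProjectionOnto y‖) →
        x = y ∨ x = -y := by
  classical
  set E := EuclideanSpace ℝ (Fin M) with hE
  -- trivial cases
  rcases subsingleton_or_nontrivial E with hsub | hnt
  · exact ⟨1, one_pos, fun W' _ x y _ => Or.inl (Subsingleton.elim x y)⟩
  rcases Nat.eq_zero_or_pos N with hN | hN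
  · subst hN
    exact ⟨1, one_pos, fun W' _ x y _ => hPR x y (fun n => Fin.elim0 n)⟩
  set T : Fin N → E →L[ℝ] E := fun n => (W n).subtypeL.comp ((W n).orthogonalProjectionOnto) with hTdef
  -- reformulated injectivity
  have hinj : ∀ u v : E, (∀ n, ⟪T n u, v⟫ = 0) → u = 0 ∨ v = 0 := by
    intro u v h
    have hnorm : ∀ n, ‖(W n).orthogonalProjectionOnto (u + v)‖
        = ‖(W n).orthogonalProjectionOnto (u - v)‖ := by
      intro n
      have h2 : ⟪T n ((u + v) + (u - v)), (u + v) - (u - v)⟫ = 0 := by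
        have e1 : (u + v) + (u - v) = (2 : ℝ) • u := by module
        have e2 : (u + v) - (u - v) = (2 : ℝ) • v := by module
        rw [e1, e2, map_smul, inner_smul_left, inner_smul_right, h n]
        simp
      have := (proj_polar (W n) (u + v) (u - v)).symm.trans h2
      have hsq : ‖(W n).orthogonalProjectionOnto (u + v)‖ ^ 2
          = ‖(W n).orthogonalProjectionOnto (u - v)‖ ^ 2 := by linarith
      exact (sq_eq_sq₀ (norm_nonneg _) (norm_nonneg _)).mp hsq
    rcases hPR (u + v) (u - v) hnorm with h1 | h1
    · right
      have h2 : (u + v) - (u - v) = 0 := by rw [h1, sub_self]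
      have h3 : (2 : ℝ) • v = 0 := by rw [← h2]; module
      simpa using smul_eq_zero.mp h3
    · left
      have h2 : (u + v) + (u - v) = 0 := by rw [h1, neg_add_cancel]
      have h3 : (2 : ℝ) • u = 0 := by rw [← h2]; module
      simpa using smul_eq_zero.mp h3
  -- compactness: uniform lower bound on the sphere
  set F : E × E → ℝ := fun p => ∑ n, ⟪T n p.1, p.2⟫ ^ 2 with hF
  have hFcont : Continuous F := by
    apply continuous_finset_sum
    intro n _
    exact (((T n).continuous.comp continuous_fst).inner continuous_snd).pow 2
  set S : Set (E × E) := Metric.sphere 0 1 ×ˢ Metric.sphere 0 1 with hS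
  have hScomp : IsCompact S := (isCompact_sphere 0 1).prod (isCompact_sphere 0 1)
  have hSne : S.Nonempty := by
    obtain ⟨w, hw⟩ := NormedSpace.sphere_nonempty (E := E) (x := 0) (r := 1) |>.mpr zero_le_one
    exact ⟨(w, w), hw, hw⟩
  obtain ⟨p, hpS, hmin⟩ := hScomp.exists_isMinOn hSne hFcont.continuousOn
  set c := F p with hc
  have hcpos : 0 < c := by
    rcases hpS with ⟨hp1, hp2⟩
    rw [mem_sphere_iff_norm, sub_zero] at hp1 hp2
    have hne : ∃ n, ⟪T n p.1, p.2⟫ ≠ 0 := by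
      by_contra hcon
      push_neg at hcon
      rcases hinj p.1 p.2 hcon with h | h <;> simp [h] at hp1 hp2
    obtain ⟨n, hn⟩ := hne
    exact Finset.sum_pos' (fun i _ => sq_nonneg _)
      ⟨n, Finset.mem_univ n, by positivity⟩
  have hcN : 0 < c / N := div_pos hcpos (Nat.cast_pos.mpr hN)
  refine ⟨Real.sqrt (c / N), Real.sqrt_pos.mpr hcN, ?_⟩
  intro W' hW' x y hxy
  set Q : Fin N → E →L[ℝ] E := fun n => (W' n).subtypeL.comp ((W' n).orthogonalProjectionOnto)
    with hQdef
  have hq : ∀ n, ⟪Q n (x + y), x - y⟫ = 0 := by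
    intro n
    rw [proj_polar (W' n) x y, hxy n, sub_self]
  -- show x + y = 0 or x - y = 0
  have hkey : x + y = 0 ∨ x - y = 0 := by
    by_contra hcon
    push_neg at hcon
    obtain ⟨hu0, hv0⟩ := hcon
    set u : E := ‖x + y‖⁻¹ • (x + y) with hu
    set v : E := ‖x - y‖⁻¹ • (x - y) with hv
    have hun : ‖u‖ = 1 := by
      rw [hu, norm_smul, norm_inv, norm_norm, inv_mul_cancel₀ (norm_ne_zero_iff.mpr hu0)]
    have hvn : ‖v‖ = 1 := by
      rw [hv, norm_smul, norm_inv, norm_norm, inv_mul_cancel₀ (norm_ne_zero_iff.mpr hv0)]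
    have hquv : ∀ n, ⟪Q n u, v⟫ = 0 := by
      intro n
      rw [hu, hv, map_smul, inner_smul_left, inner_smul_right, hq n]
      simp
    have hbound : ∀ n, |⟪T n u, v⟫| < Real.sqrt (c / N) := by
      intro n
      have h1 : ⟪T n u, v⟫ = ⟪(T n - Q n) u, v⟫ := by
        rw [ContinuousLinearMap.sub_apply, inner_sub_left, hquv n, sub_zero]
      rw [h1]
      calc |⟪(T n - Q n) u, v⟫| ≤ ‖(T n - Q n) u‖ * ‖v‖ := abs_real_inner_le_norm _ _
        _ ≤ ‖T n - Q n‖ * ‖u‖ * ‖v‖ := by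
            gcongr
            exact (T n - Q n).le_opNorm u
        _ = ‖T n - Q n‖ := by rw [hun, hvn]; ring
        _ < Real.sqrt (c / N) := hW' n
    have hsum : F (u, v) < c := by
      have hlt : ∀ n : Fin N, ⟪T n u, v⟫ ^ 2 < c / N := by
        intro n
        have := hbound n
        have h2 : ⟪T n u, v⟫ ^ 2 = |⟪T n u, v⟫| ^ 2 := (sq_abs _).symm
        rw [h2]
        calc |⟪T n u, v⟫| ^ 2 < Real.sqrt (c / N) ^ 2 :=
              pow_lt_pow_left₀ this (abs_nonneg _) two_ne_zero
          _ = c / N := Real.sq_sqrt hcN.le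
      calc F (u, v) = ∑ n : Fin N, ⟪T n u, v⟫ ^ 2 := rfl
        _ < ∑ _n : Fin N, c / N := Finset.sum_lt_sum_of_nonempty
            (Finset.univ_nonempty_iff.mpr ⟨⟨0, hN⟩⟩) (fun n _ => hlt n)
        _ = N * (c / N) := by rw [Finset.sum_const, Finset.card_univ, Fintype.card_fin,
            nsmul_eq_mul]
        _ = c := by field_simp
    have : c ≤ F (u, v) := hmin ⟨by simpa using hun, by simpa using hvn⟩
    linarith
  rcases hkey with h | h
  · right
    exact eq_neg_of_add_eq_zero_left h
  · left
    exact sub_eq_zero.mp h
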